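/- Let δ and t be real numbers with 0 < δ ≤ 1/3 and 0 < t ≤ 1/(1 + 3δ²), and let x be a real number with δ ≤ x ≤ 1 − δ. Then |∑_{n=1}^{∞} (1 − t^n) sin(2πnx)/n| ≤ (π/(2δ))(1/t − 1). -/

import Mathlib

open Real Finset

lemma sin_sum_bound (x : ℝ) (hx0 : 0 < x) (hx1 : x < 1) (N : ℕ) :
    |∑ n ∈ Finset.range N, Real.sin (2 * Real.pi * (n + 1) * x)| ≤
      1 / Real.sin (Real.pi * x) := by
  have hπ := Real.pi_pos
  have hsin : 0 < Real.sin (Real.pi * x) :=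
    Real.sin_pos_of_pos_of_lt_pi (by positivity) (by nlinarith)
  set θ : ℝ := 2 * Real.pi * x with hθ
  set z : ℂ := Complex.exp ((θ : ℝ) * Complex.I) with hz
  have hz1 : z ≠ 1 := by
    rw [hz, Ne, Complex.exp_eq_one_iff]
    rintro ⟨n, hn⟩
    have him : θ = (n : ℝ) * (2 * Real.pi) := by
      have := congrArg Complex.im hn
      simpa using this
    have him2 : (2 * Real.pi) * x = (2 * Real.pi) * (n : ℝ) := by rw [hθ] at him; linarith
    have hxn : x = (n : ℝ) := mul_left_cancel₀ (by positivity) him2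
    have h0 : (0 : ℤ) < n := by exact_mod_cast hxn ▸ hx0
    have h1 : (n : ℤ) < 1 := by exact_mod_cast hxn ▸ hx1
    omega
  have hpow : ∀ n : ℕ, z ^ (n + 1) = Complex.exp ((((n : ℝ) + 1) * θ : ℝ) * Complex.I) := by
    intro n
    rw [hz, ← Complex.exp_nat_mul]
    congr 1
    push_cast
    ring
  have him : (∑ n ∈ Finset.range N, z ^ (n + 1)).im
      = ∑ n ∈ Finset.range N, Real.sin (2 * Real.pi * (n + 1) * x) := by
    rw [Complex.im_sum]
    refine Finset.sum_congr rfl fun n _ => ?_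
    rw [hpow n, Complex.exp_ofReal_mul_I_im]
    congr 1
    rw [hθ]; ring
  have habs1 : ‖z‖ = 1 := Complex.norm_exp_ofReal_mul_I _
  have hzsub : ‖z - 1‖ = 2 * Real.sin (Real.pi * x) := by
    have hre : (z - 1).re = Real.cos θ - 1 := by
      simp [hz, Complex.exp_ofReal_mul_I_re]
    have him' : (z - 1).im = Real.sin θ := by
      simp [hz, Complex.exp_ofReal_mul_I_im]
    have hsq : (‖z - 1‖) ^ 2 = (2 * Real.sin (Real.pi * x)) ^ 2 := by
      rw [Complex.sq_norm, Complex.normSq_apply, hre, him']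
      have hc : Real.cos θ = 1 - 2 * Real.sin (Real.pi * x) ^ 2 := by
        rw [hθ, show 2 * Real.pi * x = 2 * (Real.pi * x) by ring, Real.cos_two_mul]
        have := Real.sin_sq_add_cos_sq (Real.pi * x)
        nlinarith
      have hs := Real.sin_sq_add_cos_sq θ
      nlinarith
    have h1 : (0:ℝ) ≤ ‖z - 1‖ := norm_nonneg _
    have h2 : (0:ℝ) ≤ 2 * Real.sin (Real.pi * x) := by positivity
    nlinarith
  have hsum : ∑ n ∈ Finset.range N, z ^ (n + 1) = z * ((z ^ N - 1) / (z - 1)) := by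
    rw [← geom_sum_eq hz1, Finset.mul_sum]
    exact Finset.sum_congr rfl fun n _ => by ring
  calc |∑ n ∈ Finset.range N, Real.sin (2 * Real.pi * (n + 1) * x)|
      = |(∑ n ∈ Finset.range N, z ^ (n + 1)).im| := by rw [him]
    _ ≤ ‖∑ n ∈ Finset.range N, z ^ (n + 1)‖ := Complex.abs_im_le_norm _
    _ = ‖z‖ * (‖z ^ N - 1‖ / ‖z - 1‖) := by
        rw [hsum, norm_mul, norm_div]
    _ ≤ 1 * (2 / (2 * Real.sin (Real.pi * x))) := by
        rw [habs1, hzsub]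
        have hb : ‖z ^ N - 1‖ ≤ 2 := by
          calc ‖z ^ N - 1‖ ≤ ‖z ^ N‖ + 1 := by
                simpa using norm_sub_le (z ^ N) 1
            _ ≤ 2 := by rw [norm_pow, habs1]; norm_num
        have hd : 0 < 2 * Real.sin (Real.pi * x) := by positivity
        rw [one_mul, one_mul]
        exact (div_le_div_iff_of_pos_right hd).mpr hb
    _ = 1 / Real.sin (Real.pi * x) := by
        rw [one_mul]
        rw [show (2:ℝ) * Real.sin (Real.pi * x) = 2 * Real.sin (Real.pi * x) from rfl]
        field_simp

/-- For `0 < δ ≤ 1/3`, `0 < t ≤ 1/(1 + 3δ²)`, and `δ ≤ x ≤ 1 − δ`,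
`|∑_{n=1}^∞ (1 − tⁿ) sin(2πnx)/n| ≤ (π/(2δ))(1/t − 1)`. -/
theorem tail_sin_series_bound (δ t x : ℝ) (hδ0 : 0 < δ) (hδ : δ ≤ 1 / 3)
    (ht0 : 0 < t) (ht : t ≤ 1 / (1 + 3 * δ ^ 2))
    (hx0 : δ ≤ x) (hx1 : x ≤ 1 - δ) (L : ℝ)
    (hL : Filter.Tendsto
      (fun N => ∑ n ∈ Finset.range N,
        (1 - t ^ (n + 1)) * Real.sin (2 * Real.pi * (n + 1) * x) / (n + 1))
      Filter.atTop (nhds L)) :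
    |L| ≤ (Real.pi / (2 * δ)) * (1 / t - 1) := by
  have hπ := Real.pi_pos
  have hπ3 := Real.pi_gt_three
  have ht1 : t < 1 := by
    have h1 : (1:ℝ) < 1 + 3 * δ ^ 2 := by nlinarith
    have h2 : 1 / (1 + 3 * δ ^ 2) < 1 := by
      rw [div_lt_one (by linarith)]; exact h1
    linarith
  have hx0' : 0 < x := lt_of_lt_of_le hδ0 hx0
  have hx1' : x < 1 := by linarith
  have h2δ : (0:ℝ) < 2 * δ := by linarith
  -- lower bound on sin (π x)
  have hsinx : 2 * δ ≤ Real.sin (Real.pi * x) := by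
    rcases le_or_gt x (1/2) with h | h
    · have h1 := Real.mul_le_sin (x := Real.pi * x) (by positivity) (by nlinarith)
      have h2 : 2 / Real.pi * (Real.pi * x) = 2 * x := by field_simp
      rw [h2] at h1; linarith
    · rw [show Real.pi * x = Real.pi - Real.pi * (1 - x) by ring, Real.sin_pi_sub]
      have h1 := Real.mul_le_sin (x := Real.pi * (1 - x)) (by nlinarith) (by nlinarith)
      have h2 : 2 / Real.pi * (Real.pi * (1 - x)) = 2 * (1 - x) := by field_simp
      rw [h2] at h1; linarith
  set f : ℕ → ℝ := fun n => (1 - t ^ (n + 1)) / (n + 1) with hf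
  set g : ℕ → ℝ := fun n => Real.sin (2 * Real.pi * (n + 1) * x) with hg
  have hM : ∀ m : ℕ, |∑ i ∈ Finset.range m, g i| ≤ 1 / (2 * δ) := by
    intro m
    refine (sin_sum_bound x hx0' hx1' m).trans ?_
    exact one_div_le_one_div_of_le h2δ hsinx
  have hfnonneg : ∀ n : ℕ, 0 ≤ f n := by
    intro n
    have : t ^ (n + 1) ≤ 1 := pow_le_one₀ ht0.le ht1.le
    apply div_nonneg (by linarith) (by positivity)
  have hfmono : ∀ n : ℕ, f (n + 1) ≤ f n := by
    intro n
    simp only [hf]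
    rw [div_le_div_iff₀ (by positivity) (by positivity)]
    have key : ((n:ℝ) + 1) * t ^ (n + 1) ≤ ∑ k ∈ Finset.range (n + 1), t ^ k := by
      have hterm : ∀ k ∈ Finset.range (n + 1), t ^ (n + 1) ≤ t ^ k := fun k hk =>
        pow_le_pow_of_le_one ht0.le ht1.le
          ((Nat.le_of_lt_succ (Finset.mem_range.mp hk)).trans (Nat.le_succ n))
      calc ((n:ℝ) + 1) * t ^ (n + 1) = ∑ _k ∈ Finset.range (n + 1), t ^ (n + 1) := by
            rw [Finset.sum_const, Finset.card_range, nsmul_eq_mul]; push_cast; ring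
        _ ≤ _ := Finset.sum_le_sum hterm
    have h1 := geom_sum_mul t (n + 1)
    have h2 := geom_sum_mul t (n + 2)
    have h3 : ∑ k ∈ Finset.range (n + 2), t ^ k
        = (∑ k ∈ Finset.range (n + 1), t ^ k) + t ^ (n + 1) := Finset.sum_range_succ _ _
    have hint : (0:ℝ) ≤ (1 - t) * ((∑ k ∈ Finset.range (n + 1), t ^ k) - ((n:ℝ) + 1) * t ^ (n + 1)) :=
      mul_nonneg (by linarith) (by linarith)
    have h2' : ((∑ i ∈ Finset.range (n + 1), t ^ i) + t ^ (n + 1)) * (t - 1) = t ^ (n + 2) - 1 := by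
      rw [← h3]; exact h2
    have h1n : (∑ i ∈ Finset.range (n + 1), t ^ i) * (t - 1) * ((n:ℝ) + 2)
        = (t ^ (n + 1) - 1) * ((n:ℝ) + 2) := by rw [h1]
    have h2n : ((∑ i ∈ Finset.range (n + 1), t ^ i) + t ^ (n + 1)) * (t - 1) * ((n:ℝ) + 1)
        = (t ^ (n + 2) - 1) * ((n:ℝ) + 1) := by rw [h2']
    have hpp : t ^ (n + 1 + 1) = t ^ (n + 2) := by ring
    push_cast
    rw [hpp]
    nlinarith [h1n, h2n, hint]
  -- partial sums of g
  have hSbound : ∀ N : ℕ, |∑ n ∈ Finset.range N, f n * g n| ≤ (1 - t) * (1 / (2 * δ)) := by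
    intro N
    have hMnn : (0:ℝ) ≤ 1 / (2 * δ) := by positivity
    rcases Nat.eq_zero_or_pos N with rfl | hN
    · simpa using mul_nonneg (by linarith : (0:ℝ) ≤ 1 - t) hMnn
    have habel := Finset.sum_range_by_parts f g N
    simp only [smul_eq_mul] at habel
    rw [habel]
    set B : ℕ → ℝ := fun m => ∑ i ∈ Finset.range m, g i with hB
    have h1 : |f (N - 1) * B N| ≤ f (N - 1) * (1 / (2 * δ)) := by
      rw [abs_mul, abs_of_nonneg (hfnonneg _)]
      exact mul_le_mul_of_nonneg_left (hM N) (hfnonneg _)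
    have h2 : |∑ i ∈ Finset.range (N - 1), (f (i + 1) - f i) * B (i + 1)|
        ≤ (f 0 - f (N - 1)) * (1 / (2 * δ)) := by
      calc |∑ i ∈ Finset.range (N - 1), (f (i + 1) - f i) * B (i + 1)|
          ≤ ∑ i ∈ Finset.range (N - 1), |(f (i + 1) - f i) * B (i + 1)| :=
            Finset.abs_sum_le_sum_abs _ _
        _ ≤ ∑ i ∈ Finset.range (N - 1), (f i - f (i + 1)) * (1 / (2 * δ)) := by
            refine Finset.sum_le_sum fun i _ => ?_
            rw [abs_mul, abs_of_nonpos (by linarith [hfmono i]), neg_sub]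
            exact mul_le_mul_of_nonneg_left (hM _) (by linarith [hfmono i])
        _ = (∑ i ∈ Finset.range (N - 1), (f i - f (i + 1))) * (1 / (2 * δ)) := by
            rw [← Finset.sum_mul]
        _ = (f 0 - f (N - 1)) * (1 / (2 * δ)) := by rw [Finset.sum_range_sub' f (N - 1)]
    have htri : |f (N - 1) * B N - ∑ i ∈ Finset.range (N - 1), (f (i + 1) - f i) * B (i + 1)|
        ≤ |f (N - 1) * B N| + |∑ i ∈ Finset.range (N - 1), (f (i + 1) - f i) * B (i + 1)| :=
      abs_sub _ _
    have hf0 : f 0 = 1 - t := by simp [hf]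
    calc |f (N - 1) * B N - ∑ i ∈ Finset.range (N - 1), (f (i + 1) - f i) * B (i + 1)|
        ≤ f (N - 1) * (1 / (2 * δ)) + (f 0 - f (N - 1)) * (1 / (2 * δ)) := by
          linarith [htri, h1, h2]
      _ = f 0 * (1 / (2 * δ)) := by ring
      _ = (1 - t) * (1 / (2 * δ)) := by rw [hf0]
  have hfun : ∀ N : ℕ, (∑ n ∈ Finset.range N,
      (1 - t ^ (n + 1)) * Real.sin (2 * Real.pi * (n + 1) * x) / (n + 1))
      = ∑ n ∈ Finset.range N, f n * g n := by
    intro N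
    refine Finset.sum_congr rfl fun n _ => ?_
    simp only [hf, hg]
    ring
  have hLb : |L| ≤ (1 - t) * (1 / (2 * δ)) := by
    refine le_of_tendsto hL.abs (Filter.Eventually.of_forall fun N => ?_)
    rw [hfun N]
    exact hSbound N
  refine hLb.trans ?_
  have e : 1 / t - 1 = (1 - t) / t := by field_simp
  rw [e, mul_one_div, div_mul_div_comm, div_le_div_iff₀ h2δ (by positivity)]
  nlinarith [mul_nonneg (mul_nonneg (by linarith : (0:ℝ) ≤ 1 - t) h2δ.le)
    (by linarith : (0:ℝ) ≤ Real.pi - t)]
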